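/- Let (X,d) be a complete metric space, S ⊆ X nonempty closed, Y a real topological vector space, D a convex cone, H ⊂ D a D-convex set with 0 ∉ vcl(H+D) and such that H + D is h₀-closed for some h₀ ∈ H. Assume f : X → Y is submonotone with respect to D. If x₀ ∈ S satisfies f(x₀) ∉ f(S) + εH + D for some ε > 0, then for any γ > 0 there exists x̂ ∈ S such that: (a) f(x₀) ∈ f(x̂) + γ d(x₀,x̂)H + D; (b) d(x₀,x̂) < ε/γ; (c) for all x ∈ S\{x̂}, f(x̂) ∉ f(x) + γ d(x̂,x)H + D. -/

import Mathlib

open Filter Topology Pointwise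

/-- `QQ H D c y` means `y ∈ c • H + D` elementwise. -/
def QQ {Y : Type*} [AddCommGroup Y] [Module ℝ Y] (H D : Set Y) (c : ℝ) (y : Y) : Prop :=
  ∃ h ∈ H, ∃ d ∈ D, y = c • h + d

section QQlemmas
variable {Y : Type*} [AddCommGroup Y] [Module ℝ Y] {H D : Set Y}

lemma mem_shifted_iff (H D : Set Y) (a y : Y) (c : ℝ) :
    y ∈ ({a} : Set Y) + c • H + D ↔ QQ H D c (y - a) := by
  simp only [Set.mem_add, Set.mem_smul_set, Set.mem_singleton_iff, QQ]
  constructor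
  · rintro ⟨u, ⟨a', rfl, v, ⟨h, hh, rfl⟩, rfl⟩, d, hd, rfl⟩
    exact ⟨h, hh, d, hd, by abel⟩
  · rintro ⟨h, hh, d, hd, heq⟩
    refine ⟨a + c • h, ⟨a, rfl, c • h, ⟨h, hh, rfl⟩, rfl⟩, d, hd, ?_⟩
    rw [sub_eq_iff_eq_add'] at heq
    rw [heq]; abel

lemma QQ_shrink (hDadd : ∀ a ∈ D, ∀ b ∈ D, a + b ∈ D)
    (hDsmul : ∀ α : ℝ, 0 ≤ α → ∀ d ∈ D, α • d ∈ D) (hHD : H ⊆ D) {c c' : ℝ} {y : Y}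
    (h1 : 0 ≤ c') (h2 : c' ≤ c) (hQ : QQ H D c y) :
    QQ H D c' y := by
  obtain ⟨h, hh, d, hd, rfl⟩ := hQ
  refine ⟨h, hh, (c - c') • h + d,
    hDadd _ (hDsmul _ (by linarith) h (hHD hh)) _ hd, ?_⟩
  module

lemma QQ_memD (hDadd : ∀ a ∈ D, ∀ b ∈ D, a + b ∈ D)
    (hDsmul : ∀ α : ℝ, 0 ≤ α → ∀ d ∈ D, α • d ∈ D) (hHD : H ⊆ D) {c : ℝ} {y : Y}
    (hc : 0 ≤ c) (hQ : QQ H D c y) : y ∈ D := by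
  obtain ⟨h, hh, d, hd, rfl⟩ := hQ
  exact hDadd _ (hDsmul c hc h (hHD hh)) _ hd

lemma QQ_addD (hDadd : ∀ a ∈ D, ∀ b ∈ D, a + b ∈ D) {c : ℝ} {y d : Y}
    (hQ : QQ H D c y) (hd : d ∈ D) : QQ H D c (y + d) := by
  obtain ⟨h, hh, d₁, hd₁, rfl⟩ := hQ
  exact ⟨h, hh, d₁ + d, hDadd _ hd₁ _ hd, by abel⟩

lemma QQ_add (hDadd : ∀ a ∈ D, ∀ b ∈ D, a + b ∈ D)
    (hDsmul : ∀ α : ℝ, 0 ≤ α → ∀ d ∈ D, α • d ∈ D) (hconv : Convex ℝ (H + D))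
    (hD0 : (0 : Y) ∈ D) (hh₀ : H.Nonempty)
    {c₁ c₂ : ℝ} {y₁ y₂ : Y} (hc₁ : 0 ≤ c₁) (hc₂ : 0 ≤ c₂)
    (h1 : QQ H D c₁ y₁) (h2 : QQ H D c₂ y₂) : QQ H D (c₁ + c₂) (y₁ + y₂) := by
  obtain ⟨a, ha, d₁, hd₁, rfl⟩ := h1
  obtain ⟨b, hb, d₂, hd₂, rfl⟩ := h2
  rcases eq_or_lt_of_le (add_nonneg hc₁ hc₂) with ht | ht
  · obtain ⟨h₀, hh₀⟩ := hh₀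
    have hc1 : c₁ = 0 := by linarith
    have hc2 : c₂ = 0 := by linarith
    refine ⟨h₀, hh₀, d₁ + d₂, hDadd _ hd₁ _ hd₂, ?_⟩
    rw [hc1, hc2]; simp
  · set t := c₁ + c₂ with hT
    have haH : a ∈ H + D := by simpa using Set.add_mem_add ha hD0
    have hbH : b ∈ H + D := by simpa using Set.add_mem_add hb hD0
    have hw : (c₁ / t) • a + (c₂ / t) • b ∈ H + D :=
      hconv haH hbH (div_nonneg hc₁ ht.le) (div_nonneg hc₂ ht.le)
        (by field_simp; exact hT.symm)
    obtain ⟨h', hh', d', hd', heq⟩ := Set.mem_add.mp hw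
    refine ⟨h', hh', t • d' + (d₁ + d₂),
      hDadd _ (hDsmul t ht.le d' hd') _ (hDadd _ hd₁ _ hd₂), ?_⟩
    have key : t • h' + t • d' = c₁ • a + c₂ • b := by
      rw [← smul_add, heq, smul_add, smul_smul, smul_smul,
        mul_div_cancel₀ _ ht.ne', mul_div_cancel₀ _ ht.ne']
    have h5 : (c₁ • a + d₁) + (c₂ • b + d₂) = (t • h' + t • d') + (d₁ + d₂) := by
      rw [key]; abel
    rw [h5]; abel

end QQlemmas

/-- The set of points "below" `x` in the Ekeland-type order. -/
def Bs {X Y : Type*} [MetricSpace X] [AddCommGroup Y] [Module ℝ Y]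
    (S : Set X) (H D : Set Y) (f : X → Y) (γ : ℝ) (x : X) : Set X :=
  {x' | x' ∈ S ∧ QQ H D (γ * dist x x') (f x - f x')}

section Bslemmas
variable {X Y : Type*} [MetricSpace X] [AddCommGroup Y] [Module ℝ Y]
  {S : Set X} {H D : Set Y} {f : X → Y} {γ : ℝ}

lemma Bs_refl (hD0 : (0 : Y) ∈ D) {h₀ : Y} (hh₀ : h₀ ∈ H) {x : X} (hx : x ∈ S) :
    x ∈ Bs S H D f γ x :=
  ⟨hx, ⟨h₀, hh₀, 0, hD0, by simp⟩⟩

lemma Bs_trans (hDadd : ∀ a ∈ D, ∀ b ∈ D, a + b ∈ D)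
    (hDsmul : ∀ α : ℝ, 0 ≤ α → ∀ d ∈ D, α • d ∈ D) (hHD : H ⊆ D)
    (hconv : Convex ℝ (H + D)) (hD0 : (0 : Y) ∈ D) (hHne : H.Nonempty)
    (hγ : 0 ≤ γ) {x x' x'' : X}
    (h2 : x'' ∈ Bs S H D f γ x') (h1 : x' ∈ Bs S H D f γ x) :
    x'' ∈ Bs S H D f γ x := by
  refine ⟨h2.1, ?_⟩
  have hadd := QQ_add hDadd hDsmul hconv hD0 hHne
    (mul_nonneg hγ dist_nonneg) (mul_nonneg hγ dist_nonneg) h1.2 h2.2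
  rw [sub_add_sub_cancel] at hadd
  refine QQ_shrink hDadd hDsmul hHD (mul_nonneg hγ dist_nonneg) ?_ hadd
  rw [← mul_add]
  exact mul_le_mul_of_nonneg_left (dist_triangle x x' x'') hγ

end Bslemmas

lemma seq_rec {α : Type*} (P : α → α → Prop) (a0 : α) (h : ∀ a, ∃ b, P a b) :
    ∃ u : ℕ → α, u 0 = a0 ∧ ∀ n, P (u n) (u (n + 1)) :=
  ⟨fun n => Nat.rec a0 (fun _ a => (h a).choose) n, rfl, fun _ => (h _).choose_spec⟩
/-- Vector closure of a set. -/
def vcl {Y : Type*} [AddCommGroup Y] [Module ℝ Y] (A : Set Y) : Set Y :=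
  {y | ∃ v : Y, ∃ l : ℕ → ℝ, (∀ n, 0 ≤ l n) ∧ Tendsto l atTop (nhds 0) ∧
    ∀ n, y + l n • v ∈ A}

/-- The `v₀`-vector closure of a set. -/
def vclv {Y : Type*} [AddCommGroup Y] [Module ℝ Y] (v₀ : Y) (A : Set Y) : Set Y :=
  {y | ∃ l : ℕ → ℝ, (∀ n, 0 ≤ l n) ∧ Tendsto l atTop (nhds 0) ∧
    ∀ n, y + l n • v₀ ∈ A}

/-- `f` is submonotone (D-sequentially lower monotone). -/
def Submonotone {X Y : Type*} [MetricSpace X] [AddCommGroup Y] [Module ℝ Y]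
    (D : Set Y) (f : X → Y) : Prop :=
  ∀ (x : X) (seq : ℕ → X), Tendsto seq atTop (nhds x) →
    (∀ m n : ℕ, n < m → f (seq m) - f (seq n) ∈ -D) →
    ∀ n, f x - f (seq n) ∈ -D

theorem EVP_Nemeth_h0closed {X Y : Type*} [MetricSpace X] [CompleteSpace X]
    [AddCommGroup Y] [Module ℝ Y] [TopologicalSpace Y] [IsTopologicalAddGroup Y]
    [ContinuousSMul ℝ Y]
    (S : Set X) (hSne : S.Nonempty) (hScl : IsClosed S)
    (D H : Set Y)
    (hDadd : ∀ a ∈ D, ∀ b ∈ D, a + b ∈ D)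
    (hDsmul : ∀ α : ℝ, 0 ≤ α → ∀ d ∈ D, α • d ∈ D)
    (hHD : H ⊆ D) (hconv : Convex ℝ (H + D))
    (h0 : (0 : Y) ∉ vcl (H + D))
    (h₀ : Y) (hh₀ : h₀ ∈ H) (hclosed : vclv h₀ (H + D) = H + D)
    (f : X → Y) (hsub : Submonotone D f)
    (γ ε : ℝ) (hγ : 0 < γ) (hε : 0 < ε)
    (x₀ : X) (hx₀ : x₀ ∈ S)
    (heff : f x₀ ∉ f '' S + ε • H + D) :
    ∃ xhat ∈ S,
      f x₀ ∈ {f xhat} + (γ * dist x₀ xhat) • H + D ∧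
      dist x₀ xhat < ε / γ ∧
      ∀ x ∈ S, x ≠ xhat → f xhat ∉ {f x} + (γ * dist xhat x) • H + D := by
  classical
  have hγ0 : (0:ℝ) ≤ γ := hγ.le
  have hD0 : (0 : Y) ∈ D := by simpa using hDsmul 0 le_rfl h₀ (hHD hh₀)
  have hHne : H.Nonempty := ⟨h₀, hh₀⟩
  -- efficiency in QQ form
  have hheff : ∀ z ∈ S, ∀ c : ℝ, ε ≤ c → ¬ QQ H D c (f x₀ - f z) := by
    intro z hz c hc hQ
    apply heff
    obtain ⟨h, hh, d, hd, heq⟩ := QQ_shrink hDadd hDsmul hHD hε.le hc hQ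
    rw [sub_eq_iff_eq_add'] at heq
    have h2 : f x₀ = f z + ε • h + d := by rw [heq]; abel
    rw [h2]
    exact Set.add_mem_add (Set.add_mem_add (Set.mem_image_of_mem f hz)
      (Set.smul_mem_smul_set hh)) hd
  have hbound : ∀ z ∈ Bs S H D f γ x₀, dist x₀ z < ε / γ := by
    intro z hz
    by_contra hge
    push_neg at hge
    refine hheff z hz.1 _ ?_ hz.2
    rw [div_le_iff₀ hγ] at hge
    exact le_of_le_of_eq hge (mul_comm _ _)
  have hchoice : ∀ p : {x // x ∈ Bs S H D f γ x₀}, ∃ q : {x // x ∈ Bs S H D f γ x₀},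
      q.1 ∈ Bs S H D f γ p.1 ∧ ∀ z ∈ Bs S H D f γ p.1, dist p.1 z ≤ 2 * dist p.1 q.1 := by
    rintro ⟨x, hx⟩
    have hsubB : Bs S H D f γ x ⊆ Bs S H D f γ x₀ := fun z hz =>
      Bs_trans hDadd hDsmul hHD hconv hD0 hHne hγ0 hz hx
    have hxS : x ∈ S := hx.1
    set T := (fun z => dist x z) '' (Bs S H D f γ x) with hTdef
    have hTne : T.Nonempty := ⟨dist x x, x, Bs_refl hD0 hh₀ hxS, rfl⟩
    have hTbdd : BddAbove T := by
      refine ⟨dist x x₀ + ε / γ, ?_⟩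
      rintro r ⟨z, hz, rfl⟩
      have h1 := hbound z (hsubB hz)
      have h2 := dist_triangle x x₀ z
      simp only
      linarith
    rcases le_or_gt (sSup T) 0 with hr | hr
    · refine ⟨⟨x, hx⟩, Bs_refl hD0 hh₀ hxS, fun z hz => ?_⟩
      have h1 : dist x z ≤ sSup T := le_csSup hTbdd ⟨z, hz, rfl⟩
      simp only [dist_self, mul_zero]
      linarith
    · obtain ⟨r, hrT, hlt⟩ := exists_lt_of_lt_csSup hTne (by linarith : sSup T / 2 < sSup T)
      obtain ⟨x', hx', rfl⟩ := hrT
      refine ⟨⟨x', hsubB hx'⟩, hx', fun z hz => ?_⟩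
      have h1 : dist x z ≤ sSup T := le_csSup hTbdd ⟨z, hz, rfl⟩
      simp only at hlt ⊢
      linarith
  obtain ⟨u, hu0, hustep⟩ := seq_rec
    (fun p q : {x // x ∈ Bs S H D f γ x₀} =>
      q.1 ∈ Bs S H D f γ p.1 ∧ ∀ z ∈ Bs S H D f γ p.1, dist p.1 z ≤ 2 * dist p.1 q.1)
    ⟨x₀, Bs_refl hD0 hh₀ hx₀⟩ hchoice
  set xs : ℕ → X := fun n => (u n).1 with hxs
  have hxs0 : xs 0 = x₀ := by simp [hxs, hu0]
  have hxsB : ∀ n, xs n ∈ Bs S H D f γ x₀ := fun n => (u n).2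
  have hstep : ∀ n, xs (n+1) ∈ Bs S H D f γ (xs n) := fun n => (hustep n).1
  have hmin : ∀ n, ∀ z ∈ Bs S H D f γ (xs n), dist (xs n) z ≤ 2 * dist (xs n) (xs (n+1)) :=
    fun n => (hustep n).2
  have hxsS : ∀ n, xs n ∈ S := fun n => (hxsB n).1
  have hchain : ∀ n m, n ≤ m → xs m ∈ Bs S H D f γ (xs n) := by
    intro n m h
    induction m, h using Nat.le_induction with
    | base => exact Bs_refl hD0 hh₀ (hxsS n)
    | succ m hm ih => exact Bs_trans hDadd hDsmul hHD hconv hD0 hHne hγ0 (hstep m) ih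
  set dd : ℕ → ℝ := fun n => dist (xs n) (xs (n+1)) with hdd
  have htel : ∀ N, QQ H D (γ * ∑ i ∈ Finset.range N, dd i) (f x₀ - f (xs N)) := by
    intro N
    induction N with
    | zero =>
      simp only [Finset.range_zero, Finset.sum_empty, mul_zero, hxs0, sub_self]
      exact ⟨h₀, hh₀, 0, hD0, by simp⟩
    | succ N ih =>
      have h2 := (hstep N).2
      have h3 := QQ_add hDadd hDsmul hconv hD0 hHne
        (mul_nonneg hγ0 (Finset.sum_nonneg fun i _ => dist_nonneg))
        (mul_nonneg hγ0 dist_nonneg) ih h2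
      rw [sub_add_sub_cancel] at h3
      rw [Finset.sum_range_succ, mul_add]
      exact h3
  have hTlt : ∀ N, γ * ∑ i ∈ Finset.range N, dd i < ε := by
    intro N
    by_contra hge
    push_neg at hge
    exact hheff (xs N) (hxsS N) _ hge (htel N)
  have hsummable : Summable dd := by
    apply summable_of_sum_range_le (fun n => dist_nonneg)
    intro n
    exact ((lt_div_iff₀' hγ).mpr (hTlt n)).le
  have hcauchy : CauchySeq xs :=
    cauchySeq_of_dist_le_of_summable dd (fun n => le_rfl) hsummable
  obtain ⟨xhat, hxlim⟩ := cauchySeq_tendsto_of_complete hcauchy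
  have hxhatS : xhat ∈ S := hScl.mem_of_tendsto hxlim (Eventually.of_forall hxsS)
  have hdd0 : Tendsto dd atTop (nhds 0) := hsummable.tendsto_atTop_zero
  have hmono : ∀ m n : ℕ, n < m → f (xs m) - f (xs n) ∈ -D := by
    intro m n h
    have h1 := (hchain n m h.le).2
    have h2 : f (xs n) - f (xs m) ∈ D :=
      QQ_memD hDadd hDsmul hHD (mul_nonneg hγ0 dist_nonneg) h1
    rw [Set.mem_neg, neg_sub]
    exact h2
  have hDlim : ∀ n, f (xs n) - f xhat ∈ D := by
    intro n
    have h1 := hsub xhat xs hxlim hmono n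
    rw [Set.mem_neg, neg_sub] at h1
    exact h1
  have hkey : ∀ n, QQ H D (γ * dist (xs n) xhat) (f (xs n) - f xhat) := by
    intro n
    rcases eq_or_lt_of_le (dist_nonneg (x := xs n) (y := xhat)) with h0t | h0t
    · have hx : xs n = xhat := dist_eq_zero.mp h0t.symm
      rw [hx]
      simp only [dist_self, mul_zero, sub_self]
      exact ⟨h₀, hh₀, 0, hD0, by simp⟩
    · set t := dist (xs n) xhat with htdef
      have hγt : 0 < γ * t := mul_pos hγ h0t
      have hQm : ∀ k : ℕ,
          QQ H D (γ * (t - min (dist (xs (n+1+k)) xhat) t)) (f (xs n) - f xhat) := by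
        intro k
        have h1 := (hchain n (n+1+k) (by omega)).2
        have h2 := QQ_addD hDadd h1 (hDlim (n+1+k))
        rw [sub_add_sub_cancel] at h2
        refine QQ_shrink hDadd hDsmul hHD ?_ ?_ h2
        · have hm := min_le_right (dist (xs (n+1+k)) xhat) t
          exact mul_nonneg hγ0 (by linarith)
        · refine mul_le_mul_of_nonneg_left ?_ hγ0
          have htri := dist_triangle (xs n) (xs (n+1+k)) xhat
          rcases le_total (dist (xs (n+1+k)) xhat) t with hle | hle
          · rw [min_eq_left hle]; linarith
          · rw [min_eq_right hle]
            have := dist_nonneg (x := xs n) (y := xs (n+1+k)); linarith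
      set w := (γ * t)⁻¹ • (f (xs n) - f xhat) with hwdef
      have hmemlim : ∀ k : ℕ,
          w + (min (dist (xs (n+1+k)) xhat) t / t) • h₀ ∈ H + D := by
        intro k
        obtain ⟨h, hh, d, hd, heq⟩ := hQm k
        set δ := dist (xs (n+1+k)) xhat with hδdef
        have hw2 : w = ((t - min δ t) / t) • h + (γ * t)⁻¹ • d := by
          rw [hwdef, heq, smul_add, smul_smul]
          congr 2
          field_simp
        have hcomb : ((t - min δ t) / t) • h + (min δ t / t) • h₀ ∈ H + D := by
          refine hconv ?_ ?_ ?_ ?_ ?_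
          · simpa using Set.add_mem_add hh hD0
          · simpa using Set.add_mem_add hh₀ hD0
          · refine div_nonneg ?_ h0t.le
            have := min_le_right δ t; linarith
          · exact div_nonneg (le_min dist_nonneg h0t.le) h0t.le
          · field_simp; ring
        obtain ⟨h', hh', d', hd', heq'⟩ := Set.mem_add.mp hcomb
        have hab : ((t - min δ t)/t) • h + (γ*t)⁻¹ • d + (min δ t / t) • h₀
            = (((t - min δ t)/t) • h + (min δ t / t) • h₀) + (γ*t)⁻¹ • d := by abel
        have hfinal : w + (min δ t / t) • h₀ = h' + (d' + (γ * t)⁻¹ • d) := by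
          rw [hw2, hab, ← heq', add_assoc]
        rw [hfinal]
        exact Set.add_mem_add hh'
          (hDadd _ hd' _ (hDsmul _ (inv_nonneg.mpr hγt.le) d hd))
      have hwv : w ∈ vclv h₀ (H + D) := by
        refine ⟨fun k => min (dist (xs (n+1+k)) xhat) t / t,
          fun k => div_nonneg (le_min dist_nonneg h0t.le) h0t.le, ?_, hmemlim⟩
        have hsubseq : Tendsto (fun k => xs (n+1+k)) atTop (nhds xhat) := by
          apply hxlim.comp
          exact tendsto_atTop_atTop.mpr fun b => ⟨b, fun a ha => by omega⟩
        have hδ0 : Tendsto (fun k => dist (xs (n+1+k)) xhat) atTop (nhds 0) :=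
          tendsto_iff_dist_tendsto_zero.mp hsubseq
        have hq : Tendsto (fun k => dist (xs (n+1+k)) xhat / t) atTop (nhds 0) := by
          simpa using hδ0.div_const t
        refine squeeze_zero (fun k => div_nonneg (le_min dist_nonneg h0t.le) h0t.le)
          (fun k => ?_) hq
        exact (div_le_div_iff_of_pos_right h0t).mpr (min_le_left _ _)
      rw [hclosed] at hwv
      obtain ⟨h, hh, d, hd, heq⟩ := Set.mem_add.mp hwv
      refine ⟨h, hh, (γ * t) • d, hDsmul _ hγt.le d hd, ?_⟩
      have h6 : (γ * t) • w = f (xs n) - f xhat := smul_inv_smul₀ hγt.ne' _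
      rw [← h6, ← heq, smul_add]
  have hxhatB : ∀ n, xhat ∈ Bs S H D f γ (xs n) := fun n => ⟨hxhatS, hkey n⟩
  have hxhatB0 : xhat ∈ Bs S H D f γ x₀ := by rw [← hxs0]; exact hxhatB 0
  refine ⟨xhat, hxhatS, ?_, ?_, ?_⟩
  · rw [mem_shifted_iff]
    exact hxhatB0.2
  · exact hbound xhat hxhatB0
  · intro z hz hne hcon
    rw [mem_shifted_iff] at hcon
    have hzB : ∀ n, z ∈ Bs S H D f γ (xs n) := fun n =>
      Bs_trans hDadd hDsmul hHD hconv hD0 hHne hγ0 ⟨hz, hcon⟩ (hxhatB n)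
    have hdistz : ∀ n, dist (xs n) z ≤ 2 * dd n := fun n => hmin n z (hzB n)
    have hlimz : Tendsto xs atTop (nhds z) := by
      rw [tendsto_iff_dist_tendsto_zero]
      refine squeeze_zero (fun n => dist_nonneg) hdistz ?_
      simpa using hdd0.const_mul 2
    exact hne (tendsto_nhds_unique hlimz hxlim)
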